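/- Let ν be a rank-1 valuation centered on a Noetherian local ring R (i.e., the value group of ν is archimedean), with support the minimal prime P_∞. Then the set ν(R \ P_∞) of values contains no infinite strictly increasing sequence that is bounded above. -/

import Mathlib

open IsLocalRing Submodule

open IsLocalRing Submodule

private lemma aux_isArtinian_span_singleton
    {R : Type*} [CommRing R] [IsLocalRing R]
    {M : Type*} [AddCommGroup M] [Module R M]
    (hkill : ∀ r ∈ maximalIdeal R, ∀ x : M, r • x = 0)
    (g : M) : IsArtinian R (span R {g} : Submodule R M) := by
  have hdich : ∀ N : Submodule R (span R ({g} : Set M)), N = ⊥ ∨ N = ⊤ := by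
    intro N
    by_cases hN : N = ⊥
    · exact Or.inl hN
    · right
      obtain ⟨x, hxN, hx0⟩ := Submodule.exists_mem_ne_zero_of_ne_bot hN
      obtain ⟨r, hr⟩ := Submodule.mem_span_singleton.mp x.2
      have hru : IsUnit r := by
        by_contra hru
        have : r ∈ maximalIdeal R := hru
        apply hx0
        ext
        rw [← hr]
        exact hkill r this g
      rw [eq_top_iff]
      intro y _
      obtain ⟨a, ha⟩ := Submodule.mem_span_singleton.mp y.2
      obtain ⟨u, rfl⟩ := hru
      have : y = (a * (↑u⁻¹ : R)) • x := by
        ext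
        push_cast [Submodule.coe_smul]
        rw [← ha, ← hr, mul_smul, ← mul_smul ((↑u⁻¹ : R)) (u : R), Units.inv_mul, one_smul]
      rw [this]
      exact Submodule.smul_mem _ _ hxN
  have : Finite (Submodule R (span R ({g} : Set M))) := by
    apply Finite.of_injective (fun N => (N = ⊤ : Prop))
    intro N N' h
    rcases hdich N with h1 | h1 <;> rcases hdich N' with h2 | h2 <;>
      simp_all
  exact ⟨Finite.wellFounded_of_trans_of_irrefl _⟩

private lemma aux_isArtinian_of_killed
    {R : Type*} [CommRing R] [IsLocalRing R]
    {M : Type*} [AddCommGroup M] [Module R M] [Module.Finite R M]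
    (hkill : ∀ r ∈ maximalIdeal R, ∀ x : M, r • x = 0) :
    IsArtinian R M := by
  classical
  obtain ⟨s, hs⟩ := Module.finite_def.mp ‹Module.Finite R M›
  suffices h : ∀ s : Finset M, IsArtinian R (M ⧸ span R (s : Set M)) → IsArtinian R M by
    refine h s ?_
    rw [hs]
    have : Subsingleton (M ⧸ (⊤ : Submodule R M)) :=
      Submodule.Quotient.subsingleton_iff.mpr rfl
    have : Finite (M ⧸ (⊤ : Submodule R M)) := Finite.of_subsingleton
    exact isArtinian_of_finite
  intro t
  induction t using Finset.induction with
  | empty =>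
      intro h
      rw [Finset.coe_empty, Submodule.span_empty] at h
      exact isArtinian_of_linearEquiv (Submodule.quotEquivOfEqBot (⊥ : Submodule R M) rfl)
  | @insert g t hg ih =>
      intro h
      apply ih
      set S := span R (t : Set M) with hS
      set T := span R (insert g ↑t : Set M) with hT
      have hST : S ≤ T := Submodule.span_mono (Set.subset_insert _ _)
      have hkillQ : ∀ r ∈ maximalIdeal R, ∀ x : M ⧸ S, r • x = 0 := by
        intro r hr x
        obtain ⟨y, rfl⟩ := S.mkQ_surjective x
        rw [← map_smul, hkill r hr y, map_zero]
      have hmapT : T.map S.mkQ = span R {S.mkQ g} := by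
        rw [hT, Submodule.map_span, Set.image_insert_eq, Submodule.span_insert]
        have : span R (S.mkQ '' ↑t) = ⊥ := by
          rw [Submodule.span_eq_bot]
          intro y hy
          obtain ⟨z, hz, rfl⟩ := hy
          rw [Submodule.mkQ_apply, Submodule.Quotient.mk_eq_zero]
          exact Submodule.subset_span hz
        rw [this, sup_bot_eq]
      have h2 : IsArtinian R ((M ⧸ S) ⧸ T.map S.mkQ) := by
        have hcc : IsArtinian R (M ⧸ T) := by
          rw [hT, ← Finset.coe_insert] at *
          exact h
        exact isArtinian_of_linearEquiv
          (Submodule.quotientQuotientEquivQuotient S T hST).symm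
      have h1 : IsArtinian R (T.map S.mkQ) := by
        rw [hmapT]
        exact aux_isArtinian_span_singleton hkillQ _
      exact (isArtinian_iff_submodule_quotient (T.map S.mkQ)).mpr ⟨h1, h2⟩

private lemma aux_isArtinian_quotient_pow
    {R : Type*} [CommRing R] [IsLocalRing R] [IsNoetherianRing R] (c : ℕ) :
    IsArtinian R (R ⧸ (maximalIdeal R ^ c : Ideal R)) := by
  induction c with
  | zero =>
      have : (maximalIdeal R ^ 0 : Ideal R) = ⊤ := by rw [pow_zero, Ideal.one_eq_top]
      have hsub : Subsingleton (R ⧸ (maximalIdeal R ^ 0 : Ideal R)) := by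
        rw [this]
        exact Submodule.Quotient.subsingleton_iff.mpr rfl
      have : Finite (R ⧸ (maximalIdeal R ^ 0 : Ideal R)) := Finite.of_subsingleton
      exact isArtinian_of_finite
  | succ c ih =>
      set S : Submodule R R := (maximalIdeal R ^ (c + 1) : Ideal R) with hSdef
      set N : Submodule R (R ⧸ S) := Submodule.map S.mkQ (maximalIdeal R ^ c : Ideal R) with hNdef
      have hST : S ≤ (maximalIdeal R ^ c : Ideal R) :=
        Ideal.pow_le_pow_right (Nat.le_succ c)
      have h2 : IsArtinian R ((R ⧸ S) ⧸ N) :=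
        isArtinian_of_linearEquiv
          (Submodule.quotientQuotientEquivQuotient S _ hST).symm
      have h1 : IsArtinian R N := by
        have hfg : N.FG := IsNoetherian.noetherian N
        have : Module.Finite R N := Module.Finite.iff_fg.mpr hfg
        apply aux_isArtinian_of_killed (M := N)
        intro r hr x
        obtain ⟨y, hy⟩ := x
        rw [hNdef] at hy
        obtain ⟨z, hz, rfl⟩ := hy
        have : r • z ∈ S := by
          rw [hSdef, pow_succ']
          exact Ideal.mul_mem_mul hr hz
        ext
        push_cast
        rw [← map_smul, Submodule.mkQ_apply, Submodule.Quotient.mk_eq_zero]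
        exact this
      exact (isArtinian_iff_submodule_quotient N).mpr ⟨h1, h2⟩


/-- Let ν be a rank-1 valuation (archimedean value group) centered on a
Noetherian local ring `R`, with support the minimal prime `P∞`. Then the set of values
`ν(R \ P∞)` contains no infinite strictly increasing sequence that is bounded above. -/
theorem no_bounded_strictly_increasing_sequence_of_values
    {R : Type*} [CommRing R] [IsLocalRing R] [IsNoetherianRing R]
    {Γ : Type*} [AddCommGroup Γ] [LinearOrder Γ] [IsOrderedAddMonoid Γ] [Archimedean Γ]
    (v : R → WithTop Γ)
    (hv1 : v 1 = 0) (hv0 : v 0 = ⊤)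
    (hmul : ∀ a b, v (a * b) = v a + v b)
    (hadd : ∀ a b, min (v a) (v b) ≤ v (a + b))
    (hnonneg : ∀ a, 0 ≤ v a)
    (hmax : ∀ a, a ∈ IsLocalRing.maximalIdeal R ↔ 0 < v a)
    (Pinf : Ideal R) (hPinf : ∀ a, a ∈ Pinf ↔ v a = ⊤)
    (hminimal : Pinf ∈ minimalPrimes R) :
    ¬ ∃ s : ℕ → Γ, StrictMono s ∧
        (∀ n, ∃ x : R, x ∉ Pinf ∧ v x = (s n : WithTop Γ)) ∧
        (∃ β : Γ, ∀ n, s n ≤ β) := by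
  classical
  rintro ⟨s, hmono, hex, β, hβ⟩
  -- all values are nonnegative
  have hs0 : ∀ n, (0 : Γ) ≤ s n := by
    intro n
    obtain ⟨x, -, hx⟩ := hex n
    have := hnonneg x
    rw [hx] at this
    exact_mod_cast this
  have hs1 : (0 : Γ) < s 1 := lt_of_le_of_lt (hs0 0) (hmono Nat.zero_lt_one)
  obtain ⟨x1, -, hx1⟩ := hex 1
  have hx1m : x1 ∈ maximalIdeal R := by
    rw [hmax, hx1]
    exact_mod_cast hs1
  -- a positive lower bound for values on the maximal ideal
  obtain ⟨T, hT⟩ : (maximalIdeal R).FG := IsNoetherian.noetherian _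
  set lam' : WithTop Γ := T.inf v with hlam'def
  have hlam'le : ∀ f ∈ maximalIdeal R, lam' ≤ v f := by
    intro f hf
    rw [← hT] at hf
    induction hf using Submodule.span_induction with
    | mem x hx => exact Finset.inf_le hx
    | zero => rw [hv0]; exact le_top
    | add x y hx hy ihx ihy => exact le_trans (le_min ihx ihy) (hadd x y)
    | smul a x hx ih =>
        rw [smul_eq_mul, hmul]
        exact le_trans ih (le_add_of_nonneg_left (hnonneg a))
  have hlam'pos : (0 : WithTop Γ) < lam' := by
    rw [hlam'def]
    rw [Finset.lt_inf_iff (by exact WithTop.top_pos)]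
    intro t ht
    rw [← hmax]
    rw [← hT]
    exact Submodule.subset_span ht
  have hlam'ne : lam' ≠ ⊤ := by
    intro h
    have := hlam'le x1 hx1m
    rw [h, hx1, top_le_iff] at this
    exact WithTop.coe_ne_top this
  obtain ⟨lam, hlam⟩ := WithTop.ne_top_iff_exists.mp hlam'ne
  have hlampos : (0 : Γ) < lam := by
    have h := hlam'pos
    rw [← hlam] at h
    exact_mod_cast h
  have hlamle : ∀ f ∈ maximalIdeal R, (lam : WithTop Γ) ≤ v f := by
    intro f hf; rw [hlam]; exact hlam'le f hf
  -- values on powers of the maximal ideal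
  have hpow : ∀ k : ℕ, ∀ f ∈ (maximalIdeal R) ^ k, ((k • lam : Γ) : WithTop Γ) ≤ v f := by
    intro k
    induction k with
    | zero => intro f _; simpa using hnonneg f
    | succ k ih =>
        intro f hf
        rw [pow_succ] at hf
        refine Submodule.mul_induction_on hf ?_ ?_
        · intro a ha b hb
          rw [hmul, succ_nsmul, WithTop.coe_add]
          exact add_le_add (ih a ha) (hlamle b hb)
        · intro a b h1 h2
          exact le_trans (le_min h1 h2) (hadd a b)
  -- choose c with β < c • lam
  obtain ⟨c0, hc0⟩ := Archimedean.arch β hlampos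
  set c := c0 + 1 with hcdef
  have hc : β < c • lam := by
    refine lt_of_le_of_lt hc0 ?_
    rw [hcdef, succ_nsmul]
    exact lt_add_of_pos_right _ hlampos
  -- the valuation ideals
  let I : Γ → Ideal R := fun γ =>
    { carrier := {x | (γ : WithTop Γ) ≤ v x}
      add_mem' := fun {a b} ha hb => le_trans (le_min ha hb) (hadd a b)
      zero_mem' := by simp only [Set.mem_setOf_eq, hv0]; exact le_top
      smul_mem' := fun r x hx => by
        simp only [smul_eq_mul, Set.mem_setOf_eq, hmul]
        exact le_trans hx (le_add_of_nonneg_left (hnonneg r)) }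
  have hImem : ∀ (γ : Γ) (x : R), x ∈ I γ ↔ (γ : WithTop Γ) ≤ v x := fun _ _ => Iff.rfl
  let J : ℕ → Ideal R := fun n => I (s n) ⊔ (maximalIdeal R) ^ c
  have hJanti : ∀ {n m : ℕ}, n ≤ m → J m ≤ J n := by
    intro n m hnm
    refine sup_le_sup_right ?_ _
    intro x hx
    rw [hImem] at *
    exact le_trans (by exact_mod_cast hmono.le_iff_le.mpr hnm) hx
  -- stabilization via Artinianness of R ⧸ m^c
  haveI := aux_isArtinian_quotient_pow (R := R) c
  set S : Submodule R R := (maximalIdeal R ^ c : Ideal R) with hSdef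
  let f : ℕ →o (Submodule R (R ⧸ S))ᵒᵈ :=
    ⟨fun n => Submodule.map S.mkQ (J n), fun n m hnm => Submodule.map_mono (hJanti hnm)⟩
  obtain ⟨n, hn⟩ := IsArtinian.monotone_stabilizes f
  have hstab : J n = J (n + 1) := by
    have h := hn (n + 1) (Nat.le_succ n)
    have hker : ∀ k, LinearMap.ker S.mkQ ≤ J k := by
      intro k
      rw [Submodule.ker_mkQ]
      exact le_sup_right
    have e : ∀ k, Submodule.comap S.mkQ (Submodule.map S.mkQ (J k)) = J k := by
      intro k
      rw [Submodule.comap_map_eq, sup_eq_left.mpr (hker k)]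
    rw [← e n, ← e (n + 1)]
    exact congrArg (Submodule.comap S.mkQ) h
  -- contradiction with x_n
  obtain ⟨x, -, hx⟩ := hex n
  have hxJ : x ∈ J (n + 1) := by
    rw [← hstab]
    refine Submodule.mem_sup_left ?_
    rw [hImem, hx]
  obtain ⟨a, ha, b, hb, hab⟩ := Submodule.mem_sup.mp hxJ
  have hva : ((s (n + 1) : Γ) : WithTop Γ) ≤ v a := ha
  have hvb : ((c • lam : Γ) : WithTop Γ) ≤ v b := hpow c b hb
  have hmin : ((min (s (n + 1)) (c • lam) : Γ) : WithTop Γ) ≤ v x := by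
    rw [← hab]
    refine le_trans ?_ (hadd a b)
    rw [WithTop.coe_min]
    exact le_min (le_trans (min_le_left _ _) hva) (le_trans (min_le_right _ _) hvb)
  rw [hx, WithTop.coe_le_coe] at hmin
  have h1 : s n < s (n + 1) := hmono (Nat.lt_succ_self n)
  have h2 : s n < c • lam := lt_of_le_of_lt (hβ n) hc
  exact absurd hmin (not_le.mpr (lt_min h1 h2))
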